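/- Let (M_n)_{n≥0} be a nonnegative martingale with M_0 = 1 on a filtered probability space (Ω, F, (F_n), P), and let P̄ be the probability measure satisfying P̄(A) = E(M_n·1_A) for all A ∈ F_n and all n (the martingale change of measure on F_∞ = σ(∪F_n)). Then, writing M_∞ = lim M_n (which exists P-a.s. and P̄-a.s., allowing value +∞ under P̄), one has E(M_∞) = P̄(M_∞ < ∞). In particular, if M_∞ < ∞ P̄-a.s. then M is uniformly integrable under P, and if M_∞ = ∞ P̄-a.s. then M_∞ = 0 P-a.s. -/

import Mathlib

open MeasureTheory Filter Set Topology
open scoped ENNReal NNReal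

lemma aux_tilt {Ω : Type*} {m0 : MeasurableSpace Ω} {P Pbar : Measure Ω}
    {m : MeasurableSpace Ω} (hm : m ≤ m0) {g : Ω → ℝ≥0∞} (hg : Measurable[m] g)
    (h : ∀ s, MeasurableSet[m] s → Pbar s = ∫⁻ ω in s, g ω ∂P)
    {f : Ω → ℝ≥0∞} (hf : Measurable[m] f) :
    ∫⁻ ω, f ω ∂Pbar = ∫⁻ ω, f ω * g ω ∂P := by
  have htrim : Pbar.trim hm = (P.trim hm).withDensity g := by
    refine @Measure.ext _ m _ _ fun s hs => ?_
    have h2 : ∫⁻ ω in s, g ω ∂(P.trim hm) = ∫⁻ ω in s, g ω ∂P := by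
      rw [← @lintegral_indicator _ m _ _ hs g, lintegral_trim hm (hg.indicator hs),
        lintegral_indicator (hm s hs) g]
    rw [trim_measurableSet_eq hm hs, h s hs, @withDensity_apply _ m _ _ _ hs, h2]
  calc ∫⁻ ω, f ω ∂Pbar = ∫⁻ ω, f ω ∂(Pbar.trim hm) := (lintegral_trim hm hf).symm
    _ = ∫⁻ ω, f ω ∂((P.trim hm).withDensity g) := by rw [htrim]
    _ = ∫⁻ ω, (g * f) ω ∂(P.trim hm) :=
        @lintegral_withDensity_eq_lintegral_mul _ m _ _ hg _ hf
    _ = ∫⁻ ω, f ω * g ω ∂P := by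
        simp only [Pi.mul_apply]
        rw [lintegral_trim hm (f := fun ω => g ω * f ω) (hg.mul hf)]; simp [mul_comm]

/-- Durrett's criterion: for a nonnegative martingale `M` with `M 0 = 1` and the tilted
measure `P̄(A) = E(M_n 1_A)` on `F_n`, one has `E(M_∞) = P̄(M_∞ < ∞)`; in particular `M` is
uniformly integrable under `P` if `M_∞ < ∞` `P̄`-a.s., and `M_∞ = 0` `P`-a.s. if `M_∞ = ∞`
`P̄`-a.s. Here `M_∞` is the limit of `M_n`, existing a.s. under `P` and (in `[0,∞]`)
under `P̄`. -/
theorem stmt_18 {Ω : Type*} {m0 : MeasurableSpace Ω}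
    (P : Measure Ω) [IsProbabilityMeasure P]
    (ℱ : Filtration ℕ m0) (hℱ : m0 = ⨆ n, ℱ n)
    (M : ℕ → Ω → ℝ) (hM : Martingale M ℱ P)
    (hMnonneg : ∀ n ω, 0 ≤ M n ω) (hM0 : ∀ ω, M 0 ω = 1)
    (Pbar : Measure Ω) [IsProbabilityMeasure Pbar]
    (hPbar : ∀ n, ∀ s : Set Ω, MeasurableSet[ℱ n] s →
      Pbar s = ∫⁻ ω in s, ENNReal.ofReal (M n ω) ∂P)
    (Mlim : Ω → ENNReal)
    (hMlim : ∀ ω, Mlim ω = Filter.limsup (fun n => ENNReal.ofReal (M n ω)) atTop) :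
    (∀ᵐ ω ∂P, Tendsto (fun n => ENNReal.ofReal (M n ω)) atTop (nhds (Mlim ω))) ∧
    (∀ᵐ ω ∂Pbar, Tendsto (fun n => ENNReal.ofReal (M n ω)) atTop (nhds (Mlim ω))) ∧
    (∫⁻ ω, Mlim ω ∂P = Pbar {ω | Mlim ω < ⊤}) ∧
    ((∀ᵐ ω ∂Pbar, Mlim ω < ⊤) → UniformIntegrable M 1 P) ∧
    ((∀ᵐ ω ∂Pbar, Mlim ω = ⊤) → ∀ᵐ ω ∂P, Mlim ω = 0) := by
  classical
  set Q : Measure Ω := (2 : ℝ≥0∞)⁻¹ • (P + Pbar) with hQdef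
  have hQs : ∀ s, Q s = 2⁻¹ * (P s + Pbar s) := fun s => by simp [hQdef, mul_add]
  haveI hQP : IsProbabilityMeasure Q := by
    constructor
    rw [hQs]
    simp [ENNReal.inv_mul_cancel (by norm_num : (2:ℝ≥0∞) ≠ 0) (by norm_num : (2:ℝ≥0∞) ≠ ⊤),
      (by norm_num : (1:ℝ≥0∞) + 1 = 2)]
  have hPQ : P ≪ Q := by
    intro s hs
    rw [hQs] at hs
    have := (mul_eq_zero.1 hs).resolve_left (by norm_num)
    exact (add_eq_zero.1 this).1
  have hPbarQ : Pbar ≪ Q := by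
    intro s hs
    rw [hQs] at hs
    have := (mul_eq_zero.1 hs).resolve_left (by norm_num)
    exact (add_eq_zero.1 this).2
  -- the bounded martingale L
  set L : ℕ → Ω → ℝ := fun n ω => 2 / (1 + M n ω) with hLdef
  have h1M : ∀ n ω, (0:ℝ) < 1 + M n ω := fun n ω => by linarith [hMnonneg n ω]
  have hLpos : ∀ n ω, 0 < L n ω := fun n ω => div_pos two_pos (h1M n ω)
  have hLle : ∀ n ω, L n ω ≤ 2 := fun n ω => by
    rw [hLdef]
    rw [div_le_iff₀ (h1M n ω)]
    nlinarith [hMnonneg n ω]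
  have hLmul : ∀ n ω, L n ω * (1 + M n ω) = 2 := fun n ω =>
    div_mul_cancel₀ _ (h1M n ω).ne'
  have hML : ∀ n ω, M n ω = 2 / L n ω - 1 := fun n ω => by
    have h2 : (1 + M n ω) = 2 / L n ω := by
      rw [eq_div_iff (hLpos n ω).ne', mul_comm]; exact hLmul n ω
    linarith [h2]
  have hLm : ∀ n, Measurable[ℱ n] (L n) := fun n =>
    measurable_const.div (measurable_const.add (hM.stronglyAdapted n).measurable)
  have hLm0 : ∀ n, Measurable (L n) := fun n => (hLm n).mono (ℱ.le n) le_rfl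
  have hMm0 : ∀ n, Measurable (M n) := fun n =>
    ((hM.stronglyAdapted n).measurable).mono (ℱ.le n) le_rfl
  -- key set-lintegral identity
  have lintB : ∀ n (s : Set Ω), MeasurableSet[ℱ n] s →
      ∫⁻ ω in s, ENNReal.ofReal (L n ω) ∂Q = P s := by
    intro n s hs
    have hmeasP : ∫⁻ ω in s, ENNReal.ofReal (L n ω) ∂Pbar
        = ∫⁻ ω in s, ENNReal.ofReal (L n ω) * ENNReal.ofReal (M n ω) ∂P := by
      have hfm : Measurable[ℱ n] fun ω => Set.indicator s (fun ω => ENNReal.ofReal (L n ω)) ω :=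
        (ENNReal.measurable_ofReal.comp (hLm n)).indicator hs
      have := aux_tilt (ℱ.le n)
        (ENNReal.measurable_ofReal.comp (hM.stronglyAdapted n).measurable) (hPbar n) hfm
      rw [← lintegral_indicator (ℱ.le n s hs), ← lintegral_indicator (ℱ.le n s hs), this]
      congr 1
      ext ω
      by_cases hω : ω ∈ s <;> simp [hω]
    have hsum : ∫⁻ ω in s, ENNReal.ofReal (L n ω) ∂P
        + ∫⁻ ω in s, ENNReal.ofReal (L n ω) * ENNReal.ofReal (M n ω) ∂P = 2 * P s := by
      rw [← lintegral_add_left (by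
        exact (ENNReal.measurable_ofReal.comp (hLm0 n))) _]
      have : ∀ ω, ENNReal.ofReal (L n ω) + ENNReal.ofReal (L n ω) * ENNReal.ofReal (M n ω)
          = 2 := by
        intro ω
        rw [← ENNReal.ofReal_mul (hLpos n ω).le, ← ENNReal.ofReal_add (hLpos n ω).le
          (mul_nonneg (hLpos n ω).le (hMnonneg n ω)), ← ENNReal.ofReal_ofNat 2]
        congr 1
        have := hLmul n ω
        ring_nf
        ring_nf at this
        linarith
      simp only [this]
      rw [setLIntegral_const]
    rw [hQdef]
    simp only [Measure.restrict_smul, Measure.restrict_add, lintegral_smul_measure,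
      lintegral_add_measure]
    rw [hmeasP, hsum]
    rw [smul_eq_mul, ← mul_assoc, ENNReal.inv_mul_cancel (by norm_num) (by norm_num), one_mul]
  -- L is a bounded martingale under Q
  have hLint : ∀ n, Integrable (L n) Q := fun n =>
    (integrable_const (2:ℝ)).mono' (hLm0 n).aestronglyMeasurable
      (Filter.Eventually.of_forall fun ω => by
        rw [Real.norm_eq_abs, abs_of_pos (hLpos n ω)]; exact hLle n ω)
  have setint : ∀ (m n : ℕ), m ≤ n → ∀ s : Set Ω, MeasurableSet[ℱ m] s →
      ∫ ω in s, L n ω ∂Q = (P s).toReal := by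
    intro m n hmn s hs
    have hs' : MeasurableSet[ℱ n] s := ℱ.mono hmn s hs
    rw [integral_eq_lintegral_of_nonneg_ae (Filter.Eventually.of_forall fun ω => (hLpos n ω).le)
      (hLm0 n).aestronglyMeasurable.restrict, lintB n s hs']
  have hLmart : Martingale L ℱ Q := by
    refine ⟨fun n => (hLm n).stronglyMeasurable, fun i j hij => ?_⟩
    refine (ae_eq_condExp_of_forall_setIntegral_eq (ℱ.le i) (hLint j)
      (fun s _ _ => (hLint i).integrableOn)
      (fun s hs _ => ?_)
      ((hLm i).stronglyMeasurable.aestronglyMeasurable)).symm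
    rw [setint i i le_rfl s hs, setint i j hij s hs]
  have hbdd : ∀ n, eLpNorm (L n) 1 Q ≤ ((2:ℝ≥0) : ℝ≥0∞) := fun n => by
    have h := eLpNorm_le_of_ae_bound (μ := Q) (p := 1) (f := L n) (C := 2)
      (Filter.Eventually.of_forall fun ω => by
        rw [Real.norm_eq_abs, abs_of_pos (hLpos n ω)]; exact hLle n ω)
    simpa using h
  set Linf : Ω → ℝ := ℱ.limitProcess L Q with hLinfdef
  have hconv : ∀ᵐ ω ∂Q, Tendsto (fun n => L n ω) atTop (𝓝 (Linf ω)) :=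
    hLmart.submartingale.ae_tendsto_limitProcess hbdd
  have hLinfsm : StronglyMeasurable Linf := Filtration.stronglyMeasurable_limit_process'
  -- the limit in ℝ≥0∞
  set linf : Ω → ℝ≥0∞ := fun ω => ENNReal.ofReal (Linf ω) with hlinfdef
  have hlinfm : Measurable linf := ENNReal.measurable_ofReal.comp hLinfsm.measurable
  have hlinfnetop : ∀ ω, linf ω ≠ ⊤ := fun ω => ENNReal.ofReal_ne_top
  set minf : Ω → ℝ≥0∞ := fun ω => 2 / linf ω - 1 with hminfdef
  have hminfm : Measurable minf := (measurable_const.div hlinfm).sub measurable_const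
  have hten : ∀ᵐ ω ∂Q, Tendsto (fun n => ENNReal.ofReal (M n ω)) atTop (𝓝 (minf ω))
      ∧ Mlim ω = minf ω := by
    filter_upwards [hconv] with ω hω
    have h1 : Tendsto (fun n => ENNReal.ofReal (L n ω)) atTop (𝓝 (linf ω)) :=
      (ENNReal.continuous_ofReal.tendsto _).comp hω
    have hcont : Continuous (fun x : ℝ≥0∞ => 2 / x - 1) := by
      simp only [div_eq_mul_inv]
      exact (ENNReal.continuous_sub_right 1).comp
        ((ENNReal.continuous_const_mul (by norm_num)).comp continuous_inv)
    have h2 : Tendsto (fun n => 2 / ENNReal.ofReal (L n ω) - 1) atTop (𝓝 (minf ω)) :=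
      (hcont.tendsto _).comp h1
    have heq : ∀ n, ENNReal.ofReal (M n ω) = 2 / ENNReal.ofReal (L n ω) - 1 := by
      intro n
      rw [hML n ω, ENNReal.ofReal_sub _ zero_le_one, ENNReal.ofReal_div_of_pos (hLpos n ω)]
      norm_num
    have h3 : Tendsto (fun n => ENNReal.ofReal (M n ω)) atTop (𝓝 (minf ω)) := by
      refine h2.congr fun n => (heq n).symm
    exact ⟨h3, (hMlim ω).trans h3.limsup_eq⟩
  -- conjuncts 1 and 2
  have haeP : ∀ᵐ ω ∂P, Tendsto (fun n => ENNReal.ofReal (M n ω)) atTop (𝓝 (Mlim ω)) := by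
    filter_upwards [hPQ.ae_le hten] with ω hω
    exact hω.2 ▸ hω.1
  have haePbar : ∀ᵐ ω ∂Pbar, Tendsto (fun n => ENNReal.ofReal (M n ω)) atTop (𝓝 (Mlim ω)) := by
    filter_upwards [hPbarQ.ae_le hten] with ω hω
    exact hω.2 ▸ hω.1
  -- dominated convergence
  have hDC : ∀ s : Set Ω, MeasurableSet s →
      Tendsto (fun n => ∫⁻ ω in s, ENNReal.ofReal (L n ω) ∂Q) atTop
        (𝓝 (∫⁻ ω in s, linf ω ∂Q)) := by
    intro s hs
    refine tendsto_lintegral_of_dominated_convergence (fun _ => (2:ℝ≥0∞))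
      (fun n => ENNReal.measurable_ofReal.comp (hLm0 n)) ?_ ?_ ?_
    · intro n
      refine Filter.Eventually.of_forall fun ω => ?_
      calc ENNReal.ofReal (L n ω) ≤ ENNReal.ofReal 2 := ENNReal.ofReal_le_ofReal (hLle n ω)
        _ = 2 := by norm_num
    · rw [setLIntegral_const]
      exact ENNReal.mul_ne_top (by norm_num) (measure_ne_top _ _)
    · refine ae_restrict_of_ae (hconv.mono fun ω hω => ?_)
      exact (ENNReal.continuous_ofReal.tendsto _).comp hω
  have hPid : ∀ s : Set Ω, (∃ n, MeasurableSet[ℱ n] s) → P s = ∫⁻ ω in s, linf ω ∂Q := by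
    rintro s ⟨n, hs⟩
    have h1 := hDC s (ℱ.le n s hs)
    have h2 : Tendsto (fun m => ∫⁻ ω in s, ENNReal.ofReal (L m ω) ∂Q) atTop (𝓝 (P s)) := by
      refine tendsto_const_nhds.congr' ?_
      filter_upwards [eventually_ge_atTop n] with m hm
      exact (lintB m s (ℱ.mono hm s hs)).symm
    exact tendsto_nhds_unique h2 h1
  -- π-system generation
  have hgen : m0 = MeasurableSpace.generateFrom {s : Set Ω | ∃ n, MeasurableSet[ℱ n] s} := by
    conv_lhs => rw [hℱ]
    exact MeasurableSpace.measurableSpace_iSup_eq _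
  have hpi : IsPiSystem {s : Set Ω | ∃ n, MeasurableSet[ℱ n] s} := by
    have he : {s : Set Ω | ∃ n, MeasurableSet[ℱ n] s} = ⋃ n, {s | MeasurableSet[ℱ n] s} := by
      ext s; simp [Set.mem_iUnion, Set.mem_setOf_eq]
    rw [he]
    refine isPiSystem_iUnion_of_monotone _ (fun n => ?_) (fun i j hij s hs => ℱ.mono hij s hs)
    exact fun s hs t ht _ => hs.inter ht
  have hPeq : P = Q.withDensity linf := by
    refine ext_of_generate_finite _ hgen hpi (fun s hs => ?_) ?_
    · obtain ⟨n, hn⟩ := hs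
      rw [withDensity_apply _ (ℱ.le n s hn)]
      exact hPid s ⟨n, hn⟩
    · rw [withDensity_apply _ MeasurableSet.univ]
      exact hPid Set.univ ⟨0, MeasurableSet.univ⟩
  have hlinfle : ∀ᵐ ω ∂Q, linf ω ≤ 2 := by
    filter_upwards [hconv] with ω hω
    have hle2 : Linf ω ≤ 2 := le_of_tendsto hω (Filter.Eventually.of_forall fun n => hLle n ω)
    calc linf ω ≤ ENNReal.ofReal 2 := ENNReal.ofReal_le_ofReal hle2
      _ = 2 := by norm_num
  have hPbarid : ∀ s : Set Ω, (∃ n, MeasurableSet[ℱ n] s) →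
      Pbar s = ∫⁻ ω in s, (2 - linf ω) ∂Q := by
    rintro s ⟨n, hn⟩
    have hsub : ∫⁻ ω in s, (2 - linf ω) ∂Q
        = ∫⁻ ω in s, (2:ℝ≥0∞) ∂Q - ∫⁻ ω in s, linf ω ∂Q := by
      refine lintegral_sub hlinfm ?_ ?_
      · rw [← hPid s ⟨n, hn⟩]; exact measure_ne_top P s
      · exact ae_restrict_of_ae hlinfle
    rw [hsub, setLIntegral_const, ← hPid s ⟨n, hn⟩, hQs s, ← mul_assoc,
      ENNReal.mul_inv_cancel (by norm_num) (by norm_num), one_mul]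
    exact (ENNReal.add_sub_cancel_left (measure_ne_top P s)).symm
  have hPbareq : Pbar = Q.withDensity (fun ω => 2 - linf ω) := by
    refine ext_of_generate_finite _ hgen hpi (fun s hs => ?_) ?_
    · obtain ⟨n, hn⟩ := hs
      rw [withDensity_apply _ (ℱ.le n s hn)]
      exact hPbarid s ⟨n, hn⟩
    · rw [withDensity_apply _ MeasurableSet.univ]
      exact hPbarid Set.univ ⟨0, MeasurableSet.univ⟩
  -- conjunct 3
  have hsetm : MeasurableSet {ω | linf ω ≠ 0} := (hlinfm (measurableSet_singleton 0)).compl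
  have key3 : ∫⁻ ω, Mlim ω ∂P = Pbar {ω | Mlim ω < ⊤} := by
    have e1 : ∫⁻ ω, Mlim ω ∂P = ∫⁻ ω, minf ω ∂P :=
      lintegral_congr_ae ((hten.filter_mono hPQ.ae_le).mono fun ω hω => hω.2)
    have e2 : ∫⁻ ω, minf ω ∂P = ∫⁻ ω, (linf * minf) ω ∂Q := by
      rw [hPeq]
      exact lintegral_withDensity_eq_lintegral_mul _ hlinfm hminfm
    have e3 : ∀ ω, (linf * minf) ω
        = Set.indicator {ω | linf ω ≠ 0} (fun ω => 2 - linf ω) ω := by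
      intro ω
      by_cases h0 : linf ω = 0
      · have : ω ∉ {ω | linf ω ≠ 0} := by simp [h0]
        simp [Set.indicator_of_notMem this, Pi.mul_apply, h0]
      · have hmem : ω ∈ {ω | linf ω ≠ 0} := h0
        rw [Set.indicator_of_mem hmem]
        show linf ω * (2 / linf ω - 1) = 2 - linf ω
        rw [ENNReal.mul_sub (fun _ _ => hlinfnetop ω), mul_one,
          ENNReal.mul_div_cancel h0 (hlinfnetop ω)]
    have e4 : ∫⁻ ω, (linf * minf) ω ∂Q = ∫⁻ ω in {ω | linf ω ≠ 0}, (2 - linf ω) ∂Q := by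
      rw [lintegral_congr e3, lintegral_indicator hsetm]
    have e5 : Pbar {ω | linf ω ≠ 0} = ∫⁻ ω in {ω | linf ω ≠ 0}, (2 - linf ω) ∂Q := by
      rw [hPbareq, withDensity_apply _ hsetm]
    have e6 : Pbar {ω | linf ω ≠ 0} = Pbar {ω | Mlim ω < ⊤} := by
      refine measure_congr ?_
      rw [Filter.eventuallyEq_set]
      filter_upwards [hPbarQ.ae_le hten] with ω hω
      simp only [Set.mem_setOf_eq, hω.2]
      constructor
      · intro h0
        have hlt : 2 / linf ω < ⊤ := ENNReal.div_lt_top (by norm_num) h0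
        exact lt_of_le_of_lt tsub_le_self hlt
      · intro h h0
        rw [hminfdef] at h
        simp only [h0, ENNReal.div_zero (by norm_num : (2:ℝ≥0∞) ≠ 0)] at h
        simp at h
    rw [e1, e2, e4, ← e5, e6]
  refine ⟨haeP, haePbar, key3, ?_, ?_⟩
  · -- uniform integrability
    intro h4
    set S : Ω → ℝ≥0∞ := fun ω => ⨆ n, ENNReal.ofReal (M n ω) with hSdef
    have hSm : Measurable S := Measurable.iSup fun n => ENNReal.measurable_ofReal.comp (hMm0 n)
    have hSfin : ∀ᵐ ω ∂Pbar, S ω < ⊤ := by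
      filter_upwards [haePbar, h4] with ω hω hlt
      have hev : ∀ᶠ n in atTop, ENNReal.ofReal (M n ω) ≤ Mlim ω + 1 :=
        hω.eventually_le_const (ENNReal.lt_add_right hlt.ne one_ne_zero)
      obtain ⟨N, hN⟩ := eventually_atTop.1 hev
      have hbd : ∀ n, ENNReal.ofReal (M n ω)
          ≤ ((Finset.range (N+1)).sup fun i => ENNReal.ofReal (M i ω)) ⊔ (Mlim ω + 1) := by
        intro n
        rcases le_or_gt n N with h | h
        · exact le_sup_of_le_left (Finset.le_sup (f := fun i => ENNReal.ofReal (M i ω)) (Finset.mem_range.2 (Nat.lt_succ_of_le h)))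
        · exact le_sup_of_le_right (hN n h.le)
      refine lt_of_le_of_lt (iSup_le hbd) ?_
      refine sup_lt_iff.2 ⟨?_, ?_⟩
      · refine (Finset.sup_lt_iff (by simp [lt_top_iff_ne_top])).2 fun i _ => ?_
        exact ENNReal.ofReal_lt_top
      · exact ENNReal.add_lt_top.2 ⟨hlt, by norm_num⟩
    have hIzero : Pbar (⋂ k : ℕ, {ω | (k : ℝ≥0∞) ≤ S ω}) = 0 := by
      refine measure_mono_null (fun ω hω => ?_) (ae_iff.1 hSfin)
      simp only [Set.mem_iInter, Set.mem_setOf_eq] at hω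
      simp only [Set.mem_setOf_eq, not_lt, top_le_iff]
      by_contra hne
      obtain ⟨k, hk⟩ := ENNReal.exists_nat_gt (by simpa [lt_top_iff_ne_top] using hne)
      exact absurd (hω k) (not_le.2 hk)
    have htail : Tendsto (fun k : ℕ => Pbar {ω | (k : ℝ≥0∞) ≤ S ω}) atTop (𝓝 0) := by
      have := tendsto_measure_iInter_atTop (μ := Pbar)
        (s := fun k : ℕ => {ω | (k : ℝ≥0∞) ≤ S ω})
        (fun k => (measurableSet_le measurable_const hSm).nullMeasurableSet)
        (fun i j hij ω hω => le_trans (by exact_mod_cast hij : (i:ℝ≥0∞) ≤ (j:ℝ≥0∞)) hω)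
        ⟨0, measure_ne_top _ _⟩
      rw [hIzero] at this
      exact this
    refine uniformIntegrable_of le_rfl ENNReal.one_ne_top
      (fun n => (hMm0 n).aestronglyMeasurable) ?_
    intro ε hε
    have hev : ∀ᶠ k : ℕ in atTop, Pbar {ω | (k : ℝ≥0∞) ≤ S ω} < ENNReal.ofReal ε :=
      htail.eventually_lt_const (ENNReal.ofReal_pos.2 hε)
    obtain ⟨k, hk⟩ := hev.exists
    refine ⟨(k : ℝ≥0), fun i => ?_⟩
    have htset : {x | (k:ℝ≥0) ≤ ‖M i x‖₊} = {x | (k:ℝ) ≤ M i x} := by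
      ext x
      rw [Set.mem_setOf_eq, Set.mem_setOf_eq, ← NNReal.coe_le_coe, coe_nnnorm,
        Real.norm_eq_abs, abs_of_nonneg (hMnonneg i x)]
      simp
    have htmeas : MeasurableSet[ℱ i] {x | (k:ℝ≥0) ≤ ‖M i x‖₊} := by
      rw [htset]
      exact measurableSet_le measurable_const (hM.stronglyAdapted i).measurable
    have hcalc : eLpNorm ({x | (k:ℝ≥0) ≤ ‖M i x‖₊}.indicator (M i)) 1 P
        = Pbar {x | (k:ℝ≥0) ≤ ‖M i x‖₊} := by
      rw [eLpNorm_one_eq_lintegral_enorm, hPbar i _ htmeas,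
        ← lintegral_indicator (ℱ.le i _ htmeas)]
      congr 1
      ext ω
      by_cases hω : ω ∈ {x | (k:ℝ≥0) ≤ ‖M i x‖₊}
      · simp only [Set.indicator_of_mem hω]
        exact Real.enorm_eq_ofReal (hMnonneg i ω)
      · simp [Set.indicator_of_notMem hω]
    rw [hcalc]
    refine le_trans (measure_mono fun x hx => ?_) hk.le
    rw [htset] at hx
    show (k : ℝ≥0∞) ≤ S x
    calc (k : ℝ≥0∞) = ENNReal.ofReal (k : ℝ) := by simp
      _ ≤ ENNReal.ofReal (M i x) := ENNReal.ofReal_le_ofReal hx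
      _ ≤ S x := le_iSup (fun n => ENNReal.ofReal (M n x)) i
  · -- degenerate case
    intro h5
    have h0 : Pbar {ω | Mlim ω < ⊤} = 0 := by
      have := ae_iff.1 h5
      refine measure_mono_null (fun ω hω => ?_) this
      simp only [Set.mem_setOf_eq] at hω ⊢
      exact hω.ne
    have hzero : ∫⁻ ω, Mlim ω ∂P = 0 := by rw [key3, h0]
    have hMmeq : Mlim =ᵐ[P] minf := (hten.filter_mono hPQ.ae_le).mono fun ω hω => hω.2
    have hae : AEMeasurable Mlim P := hminfm.aemeasurable.congr hMmeq.symm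
    exact (lintegral_eq_zero_iff' hae).1 hzero
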